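/- There exists a constant c > 0 (one may take c = 1/(2π²)) such that for all r ≥ 1 and all θ ∈ ℝ with |θ| ≤ π, 1 + |e^{r e^{iθ}} − 1| ≤ e^{r − c r θ²}. -/

import Mathlib

open Real Complex

/-- `(b - a) e^{(a+b)/2} ≤ e^b - e^a` for `a ≤ b` (equivalent to `sinh t ≥ t`). -/
lemma exp_sub_exp_ge (a b : ℝ) (h : a ≤ b) :
    (b - a) * Real.exp ((a+b)/2) ≤ Real.exp b - Real.exp a := by
  have ht : (0:ℝ) ≤ (b-a)/2 := by linarith
  have h1 := Real.self_le_sinh_iff.mpr ht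
  rw [Real.sinh_eq] at h1
  have h2 : Real.exp b = Real.exp ((a+b)/2) * Real.exp ((b-a)/2) := by
    rw [← Real.exp_add]; ring_nf
  have h3 : Real.exp a = Real.exp ((a+b)/2) * Real.exp (-((b-a)/2)) := by
    rw [← Real.exp_add]; ring_nf
  nlinarith [Real.exp_pos ((a+b)/2)]

/-- `|e^z - 1| ≤ e^{x/2}(e^{r/2} - e^{-r/2})` when `z = x + iy` lies on the circle
of radius `r` (i.e. `x² + y² = r²`). -/
lemma abs_bound (x y r : ℝ) (hxr : -r ≤ x) (hrx : x ≤ r) (hy2 : y^2 = r^2 - x^2) :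
    ‖Complex.exp ((x:ℂ) + (y:ℂ)*Complex.I) - 1‖
      ≤ Real.exp (x/2) * (Real.exp (r/2) - Real.exp (-(r/2))) := by
  set z : ℂ := (x:ℂ) + (y:ℂ)*Complex.I with hz
  have hre : z.re = x := by simp [hz]
  have him : z.im = y := by simp [hz]
  have h2x : Real.exp (2*x) = Real.exp x * Real.exp x := by
    rw [← Real.exp_add]; ring_nf
  have habs2 : ‖Complex.exp z - 1‖ ^ 2
      = Real.exp x * Real.exp x - 2 * Real.exp x * Real.cos y + 1 := by
    rw [Complex.sq_norm, Complex.normSq_apply]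
    simp only [Complex.sub_re, Complex.sub_im, Complex.exp_re, Complex.exp_im,
      Complex.one_re, Complex.one_im, hre, him]
    have hs := Real.sin_sq_add_cos_sq y
    nlinarith [hs]
  set B := Real.exp (x/2) * (Real.exp (r/2) - Real.exp (-(r/2))) with hB
  have hB0 : 0 ≤ B := by
    have h1 : Real.exp (-(r/2)) ≤ Real.exp (r/2) := Real.exp_le_exp.2 (by linarith)
    have h2 := Real.exp_pos (x/2)
    nlinarith
  have hcos : 1 - y^2/2 ≤ Real.cos y := Real.one_sub_sq_div_two_le_cos
  have k1 := exp_sub_exp_ge x r hrx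
  have k2 := exp_sub_exp_ge (-r) x hxr
  have e1 : Real.exp ((x + r)/2) * Real.exp ((-r + x)/2) = Real.exp x := by
    rw [← Real.exp_add]; ring_nf
  have hn2 : 0 ≤ (x - -r) * Real.exp ((-r + x)/2) :=
    mul_nonneg (by linarith) (Real.exp_pos _).le
  have key := mul_le_mul k1 k2 hn2 (by nlinarith [Real.exp_pos ((x+r)/2)] :
      (0:ℝ) ≤ Real.exp r - Real.exp x)
  have key2 : (r - x)*(x + r)*Real.exp x
      ≤ (Real.exp r - Real.exp x) * (Real.exp x - Real.exp (-r)) := by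
    have hq : (r - x)*(x + r)*Real.exp x
        = (r - x) * Real.exp ((x + r)/2) * ((x - -r) * Real.exp ((-r + x)/2)) := by
      rw [← e1]; ring
    linarith [key]
  have hB2 : B^2 = Real.exp x * Real.exp r - 2 * Real.exp x + Real.exp x * Real.exp (-r) := by
    rw [hB]
    have e2 : Real.exp (x/2) * Real.exp (x/2) = Real.exp x := by
      rw [← Real.exp_add]; ring_nf
    have e3 : Real.exp (r/2) * Real.exp (r/2) = Real.exp r := by
      rw [← Real.exp_add]; ring_nf
    have e4 : Real.exp (-(r/2)) * Real.exp (-(r/2)) = Real.exp (-r) := by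
      rw [← Real.exp_add]; ring_nf
    have e5 : Real.exp (r/2) * Real.exp (-(r/2)) = 1 := by
      rw [← Real.exp_add]; norm_num
    calc (Real.exp (x/2) * (Real.exp (r/2) - Real.exp (-(r/2))))^2
        = Real.exp (x/2)*Real.exp (x/2) * (Real.exp (r/2)*Real.exp (r/2))
          - 2*(Real.exp (x/2)*Real.exp (x/2))*(Real.exp (r/2)*Real.exp (-(r/2)))
          + Real.exp (x/2)*Real.exp (x/2) * (Real.exp (-(r/2))*Real.exp (-(r/2))) := by ring
      _ = Real.exp x * Real.exp r - 2 * Real.exp x + Real.exp x * Real.exp (-r) := by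
          rw [e2, e3, e4, e5]; ring
  have hsq : ‖Complex.exp z - 1‖ ^ 2 ≤ B ^ 2 := by
    rw [habs2, hB2]
    have e5 : Real.exp r * Real.exp (-r) = 1 := by
      rw [← Real.exp_add]; norm_num
    have hcc : 2*Real.exp x*(1 - y^2/2) ≤ 2*Real.exp x*Real.cos y :=
      mul_le_mul_of_nonneg_left hcos (by positivity)
    have hyy : Real.exp x * y^2 = Real.exp x * (r^2 - x^2) := by rw [hy2]
    nlinarith [key2, hcc, hyy, e5]
  nlinarith [norm_nonneg (Complex.exp z - 1), hB0, hsq]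

/-- Convexity of `exp` at weights `1/10, 9/10`. -/
lemma convex_step (u : ℝ) : Real.exp (-(9/10*u)) ≤ 1/10 + 9/10 * Real.exp (-u) := by
  have := convexOn_exp.2 (Set.mem_univ (0:ℝ)) (Set.mem_univ (-u))
    (by norm_num : (0:ℝ) ≤ 1/10) (by norm_num : (0:ℝ) ≤ 9/10) (by norm_num)
  simp only [smul_eq_mul, mul_zero, mul_neg, zero_add, Real.exp_zero, mul_one] at this
  linarith [this]

/-- The core real inequality: `1 - e^{-u} + e^{r-u} ≤ e^{r - u/10}` for `0 ≤ u ≤ r`, `1 ≤ r`. -/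
lemma core (r u : ℝ) (hr : 1 ≤ r) (hu0 : 0 ≤ u) (hur : u ≤ r) :
    1 - Real.exp (-u) + Real.exp (r - u) ≤ Real.exp (r - u/10) := by
  have h1 : Real.exp (r - u) = Real.exp (r - u/10) * Real.exp (-(9/10*u)) := by
    rw [← Real.exp_add]; ring_nf
  have h2 := convex_step u
  have h3 : Real.exp (9/10) ≤ Real.exp (r - u/10) := Real.exp_le_exp.2 (by linarith)
  have h4 : (1.9:ℝ) ≤ Real.exp (9/10) := by
    have := Real.add_one_le_exp (9/10 : ℝ); linarith
  have h5 : Real.exp (-u) ≤ 1 := Real.exp_le_one_iff.2 (by linarith)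
  nlinarith [Real.exp_pos (r - u/10), Real.exp_pos (-u)]

/-- Lemma 5.2: there is a constant `c > 0` (one may take
`c = 1/(2π²)`) such that `1 + |e^{r e^{iθ}} − 1| ≤ e^{r − c r θ²}` for all
`r ≥ 1` and `|θ| ≤ π`. -/
theorem one_add_abs_exp_sub_one_le :
    ∃ c : ℝ, 0 < c ∧
      ∀ r θ : ℝ, 1 ≤ r → |θ| ≤ π →
        1 + ‖Complex.exp ((r : ℂ) * Complex.exp ((θ : ℂ) * Complex.I)) - 1‖
          ≤ Real.exp (r - c * r * θ ^ 2) := by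
  have hπ := Real.pi_pos
  refine ⟨1/(10*π^2), by positivity, fun r θ hr hθ => ?_⟩
  have hr0 : (0:ℝ) < r := by linarith
  have hz : (r : ℂ) * Complex.exp ((θ:ℂ) * Complex.I)
      = ((r * Real.cos θ : ℝ):ℂ) + ((r * Real.sin θ : ℝ):ℂ)*Complex.I := by
    rw [Complex.exp_mul_I]
    push_cast
    ring
  rw [hz]
  set x := r * Real.cos θ with hx
  set y := r * Real.sin θ with hy
  have hxr : -r ≤ x := by nlinarith [Real.neg_one_le_cos θ]
  have hrx : x ≤ r := by nlinarith [Real.cos_le_one θ]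
  have hy2 : y^2 = r^2 - x^2 := by
    have := Real.sin_sq_add_cos_sq θ
    rw [hx, hy]; nlinarith
  have hab := abs_bound x y r hxr hrx hy2
  set u := (r - x)/2 with hu
  have hu0 : 0 ≤ u := by rw [hu]; linarith
  have hur : u ≤ r := by rw [hu]; linarith
  have hEq : Real.exp (x/2) * (Real.exp (r/2) - Real.exp (-(r/2)))
      = Real.exp (r - u) - Real.exp (-u) := by
    rw [mul_sub, ← Real.exp_add, ← Real.exp_add, hu]
    ring_nf
  rw [hEq] at hab
  have hcore := core r u hr hu0 hur
  have hcosb := Real.cos_le_one_sub_mul_cos_sq hθ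
  have h2 : 2/π^2*θ^2*r ≤ r - x := by
    have := mul_le_mul_of_nonneg_left hcosb hr0.le
    rw [hx]; nlinarith
  have hc : 1/(10*π^2) * r * θ^2 ≤ u/10 := by
    have hπ0 : π ≠ 0 := hπ.ne'
    have h3 : 1/(10*π^2) * r * θ^2 = (2/π^2*θ^2*r)/20 := by
      field_simp; ring
    rw [hu, h3]
    linarith [h2]
  have hfinal : Real.exp (r - u/10) ≤ Real.exp (r - 1/(10*π^2) * r * θ^2) :=
    Real.exp_le_exp.2 (by linarith)
  linarith
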